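/- arXiv:2511.21453 — 6 statements merged into one kernel-verified Lean document; each statement's English description precedes it below -/
import Mathlib

section
/- For integers d ≥ 1 and even k with 0 ≤ k ≤ d, the sum over j from k/2 to d−k/2 of C(k, k/2)·C(d−k, j−k/2)/C(d, j) equals (d+1)/(k+1). -/
open Finset

lemma aux_vm : ∀ (d s t : ℕ),
    ∑ j ∈ Finset.range (d + 1), j.choose s * (d - j).choose t
      = (d + 1).choose (s + t + 1) := by
  intro d
  induction d with
  | zero =>
    intro s t
    rcases Nat.eq_zero_or_pos s with rfl | hs
    · rcases Nat.eq_zero_or_pos t with rfl | ht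
      · simp
      · rw [Nat.choose_eq_zero_of_lt (by omega : (1:ℕ) < 0 + t + 1)]
        simp [Nat.choose_eq_zero_of_lt ht]
    · simp [Nat.choose_eq_zero_of_lt hs,
        Nat.choose_eq_zero_of_lt (by omega : (1:ℕ) < s + t + 1)]
  | succ d ih =>
    intro s t
    cases t with
    | zero =>
      have h1 : ∑ j ∈ Finset.range (d + 2), j.choose s * (d + 1 - j).choose 0
          = ∑ j ∈ Finset.range (d + 2), j.choose s := by simp
      have h2 : ∑ j ∈ Finset.Icc s (d + 1), j.choose s
          = ∑ j ∈ Finset.range (d + 2), j.choose s := by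
        apply Finset.sum_subset
        · intro x hx
          simp only [Finset.mem_Icc] at hx
          simp only [Finset.mem_range]; omega
        · intro x hx hnx
          simp only [Finset.mem_Icc, not_and, not_le] at hnx
          simp only [Finset.mem_range] at hx
          exact Nat.choose_eq_zero_of_lt (by omega)
      rw [h1, ← h2, Nat.sum_Icc_choose]
    | succ t =>
      rw [Finset.sum_range_succ]
      have hlast : (d + 1).choose s * (d + 1 - (d + 1)).choose (t + 1) = 0 := by
        simp [Nat.choose_eq_zero_of_lt (by omega : 0 < t + 1)]
      rw [hlast, add_zero]
      have hstep : ∀ j ∈ Finset.range (d + 1),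
          j.choose s * (d + 1 - j).choose (t + 1)
            = j.choose s * (d - j).choose t + j.choose s * (d - j).choose (t + 1) := by
        intro j hj
        simp only [Finset.mem_range] at hj
        have : d + 1 - j = (d - j) + 1 := by omega
        rw [this, Nat.choose_succ_succ]; ring
      rw [Finset.sum_congr rfl hstep, Finset.sum_add_distrib, ih s t, ih s (t + 1)]
      have : s + (t + 1) + 1 = (s + t + 1) + 1 := by omega
      rw [this, Nat.choose_succ_succ (d + 1) (s + t + 1)]

lemma cross_term (d s j : ℕ) (h2s : 2 * s ≤ d) (hsj : s ≤ j) (hjd : j ≤ d - s) :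
    ((2 * s).choose s * (d - 2 * s).choose (j - s) : ℝ) / (d.choose j : ℝ)
      = ((j.choose s * (d - j).choose s : ℝ)) / (d.choose (2 * s) : ℝ) := by
  have hjd' : j ≤ d := by omega
  have h1 : j - s ≤ d - 2 * s := by omega
  have h2 : s ≤ d - j := by omega
  have e1 : (2 * s : ℕ) - s = s := by omega
  have e2 : (d - 2 * s) - (j - s) = d - j - s := by omega
  have e3 : (d - j) - s = d - j - s := by omega
  have e4 : d - (2 * s) = d - 2 * s := rfl
  rw [Nat.cast_choose ℝ (by omega : s ≤ 2 * s), Nat.cast_choose ℝ h1,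
    Nat.cast_choose ℝ hjd', Nat.cast_choose ℝ hsj, Nat.cast_choose ℝ h2,
    Nat.cast_choose ℝ h2s, e1, e2, e3]
  have hne : ∀ n : ℕ, (Nat.factorial n : ℝ) ≠ 0 :=
    fun n => Nat.cast_ne_zero.mpr (Nat.factorial_ne_zero n)
  field_simp

theorem stmt_0 (d k : ℕ) (hd : 1 ≤ d) (hk : k ≤ d) (hke : Even k) :
    ∑ j ∈ Finset.Icc (k / 2) (d - k / 2),
      ((k.choose (k / 2) * (d - k).choose (j - k / 2) : ℝ) / (d.choose j : ℝ))
      = ((d : ℝ) + 1) / ((k : ℝ) + 1) := by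
  obtain ⟨s, rfl⟩ : ∃ s, k = 2 * s := by
    obtain ⟨s, hs⟩ := hke; exact ⟨s, by omega⟩
  have hs2 : 2 * s / 2 = s := by omega
  rw [hs2]
  have hstep : ∀ j ∈ Finset.Icc s (d - s),
      ((2 * s).choose s * (d - 2 * s).choose (j - s) : ℝ) / (d.choose j : ℝ)
        = ((j.choose s * (d - j).choose s : ℝ)) / (d.choose (2 * s) : ℝ) := by
    intro j hj
    simp only [Finset.mem_Icc] at hj
    exact cross_term d s j hk hj.1 hj.2
  rw [Finset.sum_congr rfl hstep, ← Finset.sum_div]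
  have hext : ∑ j ∈ Finset.Icc s (d - s), ((j.choose s * (d - j).choose s : ℕ) : ℝ)
      = ∑ j ∈ Finset.range (d + 1), ((j.choose s * (d - j).choose s : ℕ) : ℝ) := by
    apply Finset.sum_subset
    · intro x hx
      simp only [Finset.mem_Icc] at hx
      simp only [Finset.mem_range]; omega
    · intro x hx hnx
      simp only [Finset.mem_Icc, not_and, not_le] at hnx
      simp only [Finset.mem_range] at hx
      rcases le_or_gt s x with h | h
      · have := hnx h
        have : (d - x).choose s = 0 := Nat.choose_eq_zero_of_lt (by omega)
        simp [this]
      · simp [Nat.choose_eq_zero_of_lt h]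
  have hnat : ∑ j ∈ Finset.Icc s (d - s), j.choose s * (d - j).choose s
      = (d + 1).choose (s + s + 1) := by
    rw [Finset.sum_subset (s₁ := Finset.Icc s (d - s)) (s₂ := Finset.range (d + 1))
      (by intro x hx; simp only [Finset.mem_Icc] at hx; simp only [Finset.mem_range]; omega)
      (by intro x hx hnx
          simp only [Finset.mem_Icc, not_and, not_le] at hnx
          simp only [Finset.mem_range] at hx
          rcases le_or_gt s x with h | h
          · have : (d - x).choose s = 0 := Nat.choose_eq_zero_of_lt (by omega)
            simp [this]
          · simp [Nat.choose_eq_zero_of_lt h])]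
    exact aux_vm d s s
  have hcast : ∑ j ∈ Finset.Icc s (d - s), ((j.choose s * (d - j).choose s : ℕ) : ℝ)
      = (((d + 1).choose (s + s + 1) : ℕ) : ℝ) := by
    rw [← Nat.cast_sum]; exact_mod_cast congrArg (Nat.cast (R := ℝ)) hnat
  push_cast at hcast
  rw [hcast]
  -- now: (↑((d+1).choose (s+s+1))) / ↑(d.choose (2*s)) = (d+1)/(2s+1)
  have key : ((d + 1 : ℕ) : ℝ) * (d.choose (2 * s) : ℝ)
      = ((d + 1).choose (s + s + 1) : ℝ) * ((2 * s : ℕ) + 1 : ℝ) := by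
    have := Nat.add_one_mul_choose_eq d (2 * s)
    have h2 : s + s + 1 = 2 * s + 1 := by omega
    rw [h2]
    exact_mod_cast congrArg (Nat.cast (R := ℝ)) this
  have hc1 : (d.choose (2 * s) : ℝ) ≠ 0 := Nat.cast_ne_zero.mpr ((Nat.choose_pos hk).ne')
  have hc2 : ((2 * s : ℕ) : ℝ) + 1 ≠ 0 := by positivity
  rw [div_eq_div_iff hc1 (by push_cast; positivity)]
  push_cast at key ⊢
  linarith [key]
end

section
/- For each integer d ≥ 2 and t ∈ (0,1], the transfer function F_d(t) = −(1/(d+1))·(d·coth(d·artanh(t)) − 1/t) satisfies |F_d(t)| < 1. -/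
/-- Hyperbolic cotangent. -/
noncomputable def coth (x : ℝ) : ℝ := Real.cosh x / Real.sinh x

/-- Inverse hyperbolic tangent. -/
noncomputable def artanh (x : ℝ) : ℝ := (1 / 2) * Real.log ((1 + x) / (1 - x))

/-- The AKLT single-site transfer function `F_d`, extended by `F_d 0 = 0`. -/
noncomputable def F (D t : ℝ) : ℝ :=
  if t = 0 then 0 else -(1 / (D + 1)) * (D * coth (D * artanh t) - 1 / t)

lemma sinh_lt_mul_cosh {x : ℝ} (hx : 0 < x) : Real.sinh x < x * Real.cosh x := by
  have hmono : StrictMonoOn (fun y : ℝ => y * Real.cosh y - Real.sinh y) (Set.Ici 0) := by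
    apply strictMonoOn_of_deriv_pos (convex_Ici 0)
    · fun_prop
    · intro y hy
      rw [interior_Ici] at hy
      have hy' : (0:ℝ) < y := hy
      have hd : HasDerivAt (fun y : ℝ => y * Real.cosh y - Real.sinh y)
          (1 * Real.cosh y + y * Real.sinh y - Real.cosh y) y :=
        ((hasDerivAt_id y).mul (Real.hasDerivAt_cosh y)).sub (Real.hasDerivAt_sinh y)
      rw [hd.deriv]
      have := Real.sinh_pos_iff.2 hy'
      nlinarith
  have := hmono (Set.self_mem_Ici) (Set.mem_Ici.2 hx.le) hx
  simpa using this

lemma one_div_lt_coth {x : ℝ} (hx : 0 < x) : 1 / x < coth x := by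
  have hs := Real.sinh_pos_iff.2 hx
  rw [coth, div_lt_div_iff₀ hx hs]
  have := sinh_lt_mul_cosh hx
  nlinarith

lemma coth_lt {x : ℝ} (hx : 0 < x) : coth x < 1 / x + 1 := by
  have hs := Real.sinh_pos_iff.2 hx
  have hpos := Real.exp_pos x
  have h1 : 2 * x + 1 < Real.exp x * Real.exp x := by
    have h := Real.add_one_lt_exp (x := 2 * x) (by positivity)
    have : Real.exp (2 * x) = Real.exp x * Real.exp x := by
      rw [← Real.exp_add]; ring_nf
    linarith [this ▸ h]
  have hinv : Real.exp x * (1 / Real.exp x) = 1 := by field_simp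
  have key : x * (1 / Real.exp x) < Real.sinh x := by
    rw [Real.sinh_eq, Real.exp_neg, ← one_div]
    nlinarith [mul_pos hpos hpos, hpos]
  have hcs : Real.cosh x = Real.sinh x + Real.exp (-x) := by
    rw [Real.cosh_eq, Real.sinh_eq]; ring
  have h2 : Real.exp (-x) < Real.sinh x / x := by
    rw [lt_div_iff₀ hx, Real.exp_neg, ← one_div]
    nlinarith [key]
  rw [coth, div_lt_iff₀ hs]
  have h3 : (1 / x) * Real.sinh x = Real.sinh x / x := one_div_mul_eq_div x _
  nlinarith [h2, hcs, h3]

lemma artanh_pos {t : ℝ} (h0 : 0 < t) (h1 : t < 1) : 0 < artanh t := by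
  rw [artanh]
  have : (1:ℝ) < (1 + t) / (1 - t) := by
    rw [lt_div_iff₀ (by linarith)]; linarith
  have := Real.log_pos this
  positivity

lemma coth_artanh {t : ℝ} (h0 : 0 < t) (h1 : t < 1) : coth (artanh t) = 1 / t := by
  have hrat : (0:ℝ) < (1 + t) / (1 - t) := by
    apply div_pos <;> linarith
  have ha := artanh_pos h0 h1
  have hu : Real.exp (2 * artanh t) = (1 + t) / (1 - t) := by
    rw [artanh, show 2 * ((1:ℝ) / 2 * Real.log ((1 + t) / (1 - t)))
      = Real.log ((1 + t) / (1 - t)) by ring]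
    exact Real.exp_log hrat
  set a := artanh t
  have hs := Real.sinh_pos_iff.2 ha
  have hpos := Real.exp_pos a
  have he : Real.exp a * Real.exp a = (1 + t) / (1 - t) := by
    rw [← Real.exp_add, show a + a = 2 * a by ring]; exact hu
  have h1t : (1:ℝ) - t ≠ 0 := by linarith
  have he2 : Real.exp a * Real.exp a * (1 - t) = 1 + t := by
    field_simp at he; linarith [he]
  rw [coth, Real.cosh_eq, Real.sinh_eq, Real.exp_neg]
  rw [Real.sinh_eq, Real.exp_neg] at hs
  rw [div_eq_div_iff (by simpa using hs.ne') h0.ne']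
  field_simp
  nlinarith [he2, hpos]

theorem stmt_5 (d : ℕ) (hd : 2 ≤ d) (t : ℝ) (ht : t ∈ Set.Ioc (0 : ℝ) 1) :
    |F (d : ℝ) t| < 1 := by
  obtain ⟨ht0, ht1⟩ := ht
  have hd2 : (2:ℝ) ≤ (d:ℝ) := by exact_mod_cast hd
  have hdpos : (0:ℝ) < (d:ℝ) := by linarith
  have hd1 : (0:ℝ) < (d:ℝ) + 1 := by linarith
  have hinv1 : (1 / ((d:ℝ) + 1)) * ((d:ℝ) + 1) = 1 := by field_simp
  rcases eq_or_lt_of_le ht1 with h1 | h1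
  · subst h1
    have hart : artanh 1 = 0 := by simp [artanh]
    have hcoth0 : coth ((d:ℝ) * artanh 1) = 0 := by simp [hart, coth]
    rw [F, if_neg one_ne_zero, hcoth0]
    rw [abs_lt]
    constructor
    · nlinarith [hinv1]
    · nlinarith [hinv1]
  · have ha := artanh_pos ht0 h1
    have hda : 0 < (d:ℝ) * artanh t := by positivity
    have hct := coth_artanh ht0 h1
    have hub := coth_lt hda
    have hlb := one_div_lt_coth hda
    have hub' := coth_lt ha
    have hlb' := one_div_lt_coth ha
    rw [F, if_neg ht0.ne', ← hct]
    have hkey : (d:ℝ) * (1 / ((d:ℝ) * artanh t)) = 1 / artanh t := by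
      field_simp
    have hmul1 := mul_lt_mul_of_pos_left hub hdpos
    have hmul2 := mul_lt_mul_of_pos_left hlb hdpos
    have hupper : (d:ℝ) * coth ((d:ℝ) * artanh t) - coth (artanh t) < (d:ℝ) := by
      nlinarith [hmul1, hkey, hlb']
    have hlower : -1 < (d:ℝ) * coth ((d:ℝ) * artanh t) - coth (artanh t) := by
      nlinarith [hmul2, hkey, hub']
    rw [abs_lt]
    constructor
    · nlinarith [hinv1, hupper, hd1]
    · nlinarith [hinv1, hlower, hd1]
end

section
/- For every integer d ≥ 5, there exists t₀ ∈ (0,1] such that F_d(t₀) = −t₀, where F_d(t) = −(1/(d+1))·(d·coth(d·artanh(t)) − 1/t). -/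
private lemma cosh_mul (y : ℝ) : Real.cosh y * (2 * Real.exp y) = Real.exp y ^ 2 + 1 := by
  rw [Real.cosh_eq, Real.exp_neg]
  have hE : Real.exp y ≠ 0 := (Real.exp_pos y).ne'
  field_simp

private lemma sinh_mul (y : ℝ) : Real.sinh y * (2 * Real.exp y) = Real.exp y ^ 2 - 1 := by
  rw [Real.sinh_eq, Real.exp_neg]
  have hE : Real.exp y ≠ 0 := (Real.exp_pos y).ne'
  field_simp

private lemma exp_two_mul_bounds {y : ℝ} (h0 : 0 < y) (h1 : y ≤ 1/5) :
    Real.exp y ^ 2 ≤ 1 + 2*y + 2*y^2 + 4*y^3/3 + 5*y^4/6 ∧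
    1 + 2*y + 2*y^2 + 4*y^3/3 - 5*y^4/6 ≤ Real.exp y ^ 2 := by
  have hx : |2*y| ≤ 1 := by rw [abs_of_pos (by linarith)]; linarith
  have h := Real.exp_bound hx (n := 4) (by norm_num)
  rw [abs_of_pos (by linarith : (0:ℝ) < 2*y)] at h
  have hsum : ∑ m ∈ Finset.range 4, (2*y)^m / m.factorial = 1 + 2*y + 2*y^2 + 4*y^3/3 := by
    simp [Finset.sum_range_succ, Nat.factorial]
    ring
  rw [hsum] at h
  rw [abs_sub_le_iff] at h
  have h2 : Real.exp (2*y) = Real.exp y ^ 2 := by rw [two_mul, Real.exp_add]; ring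
  rw [h2] at h
  have hb : ((4:ℕ).succ : ℝ) / ((4:ℕ).factorial * (4:ℕ)) = 5/96 := by
    norm_num [Nat.factorial]
  rw [hb] at h
  constructor <;> nlinarith [h.1, h.2]

private lemma tanh_le {y : ℝ} (h0 : 0 < y) (h1 : y ≤ 1/5) : Real.tanh y ≤ y := by
  rw [Real.tanh_eq_sinh_div_cosh, div_le_iff₀ (Real.cosh_pos y)]
  have hE : 0 < 2 * Real.exp y := by positivity
  apply le_of_mul_le_mul_right _ hE
  rw [sinh_mul, mul_assoc, cosh_mul]
  have hb := (exp_two_mul_bounds h0 h1).1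
  nlinarith [mul_le_mul_of_nonneg_left hb (show (0:ℝ) ≤ 1 - y by linarith),
    pow_pos h0 3, pow_pos h0 4, pow_pos h0 5,
    mul_le_mul_of_nonneg_right h1 (pow_nonneg h0.le 3),
    mul_le_mul_of_nonneg_right h1 (pow_nonneg h0.le 4)]

private lemma coth_le {y : ℝ} (h0 : 0 < y) (h1 : y ≤ 1/5) : coth y ≤ 1/y + y := by
  have hs : 0 < Real.sinh y := by rwa [Real.sinh_pos_iff]
  rw [coth, div_le_iff₀ hs]
  have hyy : 1/y + y = (1 + y^2)/y := by field_simp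
  rw [hyy, div_mul_eq_mul_div, le_div_iff₀ h0]
  have hE : 0 < 2 * Real.exp y := by positivity
  apply le_of_mul_le_mul_right _ hE
  have h1' : (1 + y^2) * Real.sinh y * (2*Real.exp y) = (1 + y^2) * (Real.exp y^2 - 1) := by
    rw [mul_assoc, sinh_mul]
  have h2' : Real.cosh y * y * (2*Real.exp y) = y * (Real.exp y^2 + 1) := by
    rw [mul_comm (Real.cosh y) y, mul_assoc, cosh_mul]
  rw [h1', h2']
  have hb := (exp_two_mul_bounds h0 h1).2
  nlinarith [mul_le_mul_of_nonneg_left hb (show (0:ℝ) ≤ 1 - y + y^2 by nlinarith),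
    pow_pos h0 3, pow_pos h0 4, pow_pos h0 5, pow_pos h0 6,
    mul_le_mul_of_nonneg_right h1 (pow_nonneg h0.le 3),
    mul_le_mul_of_nonneg_right h1 (pow_nonneg h0.le 4),
    mul_le_mul_of_nonneg_right h1 (pow_nonneg h0.le 5)]

private lemma coth_one_gt : (131:ℝ)/100 < coth 1 := by
  have hs : 0 < Real.sinh 1 := by rw [Real.sinh_pos_iff]; norm_num
  rw [coth, lt_div_iff₀ hs]
  have hE : 0 < 2 * Real.exp 1 := by positivity
  apply lt_of_mul_lt_mul_right _ hE.le
  rw [mul_assoc, sinh_mul, cosh_mul]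
  have h1 := Real.exp_one_lt_d9
  have h2 := Real.exp_one_gt_d9
  nlinarith

private lemma artanh_tanh (x : ℝ) : artanh (Real.tanh x) = x := by
  have hc : 0 < Real.cosh x := Real.cosh_pos x
  have hcs : Real.cosh x - Real.sinh x = Real.exp (-x) := Real.cosh_sub_sinh x
  have hcs' : 0 < Real.cosh x - Real.sinh x := by rw [hcs]; exact Real.exp_pos _
  have h1 : 1 + Real.tanh x = (Real.cosh x + Real.sinh x) / Real.cosh x := by
    rw [Real.tanh_eq_sinh_div_cosh]; field_simp
  have h2 : 1 - Real.tanh x = (Real.cosh x - Real.sinh x) / Real.cosh x := by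
    rw [Real.tanh_eq_sinh_div_cosh]; field_simp
  have h3 : (1 + Real.tanh x) / (1 - Real.tanh x) = Real.exp (2*x) := by
    rw [h1, h2, div_div_div_cancel_right₀]
    · rw [Real.cosh_add_sinh, hcs, ← Real.exp_sub]; ring_nf
    · exact hc.ne'
  rw [artanh, h3, Real.log_exp]; ring

private lemma coth_eq_exp {y : ℝ} (hy : 0 < y) :
    coth y = (Real.exp y ^ 2 + 1) / (Real.exp y ^ 2 - 1) := by
  have hs : 0 < Real.sinh y := by rwa [Real.sinh_pos_iff]
  have hgt : 1 < Real.exp y ^ 2 := by nlinarith [Real.add_one_le_exp y]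
  rw [coth, div_eq_div_iff hs.ne' (by linarith : Real.exp y ^2 - 1 ≠ 0)]
  have hE : (0:ℝ) < 2 * Real.exp y := by positivity
  apply mul_right_cancel₀ hE.ne'
  have := cosh_mul y
  have := sinh_mul y
  nlinarith [cosh_mul y, sinh_mul y]

set_option maxHeartbeats 1000000 in
theorem stmt_9 (d : ℕ) (hd : 5 ≤ d) :
    ∃ t₀ ∈ Set.Ioc (0 : ℝ) 1, F (d : ℝ) t₀ = -t₀ := by
  set D : ℝ := (d : ℝ) with hDdef
  have hD : (5:ℝ) ≤ D := by rw [hDdef]; exact_mod_cast hd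
  have hD0 : (0:ℝ) < D := by linarith
  have hD1 : (0:ℝ) < D + 1 := by linarith
  set a : ℝ := Real.tanh (1/D) with ha
  set b : ℝ := D/(D+1) with hb
  clear_value D a b
  have hyd : 0 < 1/D := by positivity
  have hyd5 : 1/D ≤ 1/5 := by
    rw [div_le_div_iff₀ hD0 (by norm_num)]; linarith
  have hsinh : 0 < Real.sinh (1/D) := Real.sinh_pos_iff.mpr hyd
  have ha0 : 0 < a := by
    rw [ha, Real.tanh_eq_sinh_div_cosh]; exact div_pos hsinh (Real.cosh_pos _)
  have haD : a ≤ 1/D := by rw [ha]; exact tanh_le hyd hyd5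
  have hb1 : b < 1 := by
    rw [hb, div_lt_one hD1]; linarith
  have hb0 : 0 < b := by rw [hb]; positivity
  have hab : a ≤ b := by
    have : 1/D ≤ b := by
      rw [hb, div_le_div_iff₀ hD0 hD1]; nlinarith
    linarith
  -- artanh values
  have hart_a : artanh a = 1/D := by rw [ha]; exact artanh_tanh _
  have hbval : (1 + b)/(1 - b) = 2*D+1 := by
    rw [hb]
    have h1 : (1:ℝ) - D/(D+1) = 1/(D+1) := by field_simp; ring
    have h2 : (1:ℝ) + D/(D+1) = (2*D+1)/(D+1) := by field_simp; ring
    rw [h1, h2, div_div_div_cancel_right₀ hD1.ne', div_one]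
  have hart_b : artanh b = (1/2) * Real.log (2*D+1) := by
    rw [artanh, hbval]
  -- value of F at a
  have hFa : F D a = -(1 / (D + 1)) * (D * coth 1 - 1 / a) := by
    rw [F, if_neg ha0.ne', hart_a, mul_one_div_cancel hD0.ne']
  have h1a : 1/a = coth (1/D) := by
    rw [coth, ha, Real.tanh_eq_sinh_div_cosh, one_div_div]
  have hcothd : coth (1/D) ≤ D + 1/D := by
    have := coth_le hyd hyd5
    rwa [one_div_one_div] at this
  have hkey_a : (D+1)*a + 1/a < D * coth 1 := by
    rw [h1a]
    have h4 := coth_one_gt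
    have : (D+1)*a ≤ (D+1)*(1/D) := by
      apply mul_le_mul_of_nonneg_left haD (by linarith)
    have hDD : (D+1)*(1/D) = 1 + 1/D := by field_simp
    have h2D : 1/D ≤ 1/5 := hyd5
    nlinarith [mul_lt_mul_of_pos_left h4 hD0]
  have hGa : F D a + a < 0 := by
    rw [hFa]
    have h5 : a < (D * coth 1 - 1/a) / (D+1) := by
      rw [lt_div_iff₀ hD1]; nlinarith
    have h6 : -(1 / (D + 1)) * (D * coth 1 - 1 / a) = -((D * coth 1 - 1/a)/(D+1)) := by
      ring
    rw [h6]; linarith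
  -- value of F at b
  have hlog : 0 < Real.log (2*D+1) := Real.log_pos (by linarith)
  have hyb : 0 < D * artanh b := by
    rw [hart_b]; positivity
  have hexp2 : Real.exp (D * artanh b) ^ 2 = (2*D+1)^d := by
    rw [hart_b, sq, ← Real.exp_add]
    rw [show D * (1/2 * Real.log (2*D+1)) + D * (1/2 * Real.log (2*D+1))
        = D * Real.log (2*D+1) by ring]
    rw [hDdef, Real.exp_nat_mul, Real.exp_log]
    have : (0:ℝ) ≤ (d:ℝ) := Nat.cast_nonneg d
    linarith
  set N : ℝ := (2*D+1)^d with hN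
  have hNbig : (2*D+1)^2 ≤ N := by
    rw [hN]
    exact pow_le_pow_right₀ (by linarith) (by omega)
  have hN1 : (1:ℝ) < N := by nlinarith
  clear_value N
  have hcothb : coth (D * artanh b) = (N + 1) / (N - 1) := by
    rw [coth_eq_exp hyb, hexp2]
  have hFb : F D b = -(1 / (D + 1)) * (D * ((N+1)/(N-1)) - 1 / b) := by
    rw [F, if_neg hb0.ne', hcothb]
  have h1b : 1/b = (D+1)/D := by rw [hb, one_div_div]
  have hkey_b : D * ((N+1)/(N-1)) - 1/b < (D+1) * b := by
    have hb' : (D+1) * b = D := by rw [hb]; field_simp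
    rw [h1b, hb']
    have hNpos : (0:ℝ) < N - 1 := by linarith
    have hfrac : (N+1)/(N-1) < (D^2+D+1)/D^2 := by
      rw [div_lt_div_iff₀ hNpos (by positivity)]
      nlinarith [mul_le_mul_of_nonneg_left hNbig (show (0:ℝ) ≤ D+1 by linarith)]
    have hmul : D * ((N+1)/(N-1)) < D * ((D^2+D+1)/D^2) :=
      mul_lt_mul_of_pos_left hfrac hD0
    have heq : D * ((D^2+D+1)/D^2) = D + (D+1)/D := by field_simp; ring
    rw [heq] at hmul
    linarith
  have hGb : 0 < F D b + b := by
    rw [hFb]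
    have h5 : (D * ((N+1)/(N-1)) - 1/b) / (D+1) < b := by
      rw [div_lt_iff₀ hD1]; nlinarith
    have h6 : -(1 / (D + 1)) * (D * ((N+1)/(N-1)) - 1 / b)
        = -((D * ((N+1)/(N-1)) - 1/b)/(D+1)) := by ring
    rw [h6]; linarith
  -- continuity
  have hmem : ∀ t ∈ Set.Icc a b, 0 < t ∧ t < 1 := fun t ht =>
    ⟨lt_of_lt_of_le ha0 ht.1, lt_of_le_of_lt ht.2 hb1⟩
  have hartc : ContinuousOn (fun t : ℝ => artanh t) (Set.Icc a b) := by
    simp only [artanh]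
    apply ContinuousOn.mul continuousOn_const
    apply ContinuousOn.log
    · apply ContinuousOn.div (continuousOn_const.add continuousOn_id)
        (continuousOn_const.sub continuousOn_id)
      intro t ht
      have h2 := (hmem t ht).2
      intro h
      simp only [Pi.sub_apply, id_eq, sub_eq_zero] at h
      linarith
    · intro t ht
      have h1 := (hmem t ht).1
      have h2 := (hmem t ht).2
      have hpos : (0:ℝ) < (1 + t)/(1 - t) := div_pos (by linarith) (by linarith)
      try simp only [id_eq]
      exact ne_of_gt hpos
  have hartpos : ∀ t ∈ Set.Icc a b, 0 < artanh t := by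
    intro t ht
    have h1 := (hmem t ht).1
    have h2 := (hmem t ht).2
    rw [artanh]
    have : (1:ℝ) < (1 + t)/(1 - t) := by
      rw [lt_div_iff₀ (by linarith)]; linarith
    have := Real.log_pos this
    positivity
  have hGcont : ContinuousOn (fun t => F D t + t) (Set.Icc a b) := by
    apply ContinuousOn.congr (f := fun t : ℝ =>
      -(1 / (D + 1)) * (D * (Real.cosh (D * artanh t) / Real.sinh (D * artanh t)) - 1 / t) + t)
    · apply ContinuousOn.add _ continuousOn_id
      apply ContinuousOn.mul continuousOn_const
      apply ContinuousOn.sub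
      · apply ContinuousOn.mul continuousOn_const
        apply ContinuousOn.div
        · exact Real.continuous_cosh.comp_continuousOn (continuousOn_const.mul hartc)
        · exact Real.continuous_sinh.comp_continuousOn (continuousOn_const.mul hartc)
        · intro t ht
          have : 0 < D * artanh t := mul_pos hD0 (hartpos t ht)
          exact (Real.sinh_pos_iff.mpr this).ne'
      · exact ContinuousOn.div continuousOn_const continuousOn_id
          (fun t ht => (hmem t ht).1.ne')
    · intro t ht
      simp only [F, if_neg (hmem t ht).1.ne', coth]
  -- IVT
  have h0mem : (0:ℝ) ∈ Set.Icc (F D a + a) (F D b + b) := ⟨hGa.le, hGb.le⟩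
  obtain ⟨t₀, ht₀, hFt₀⟩ := intermediate_value_Icc hab hGcont h0mem
  refine ⟨t₀, ⟨lt_of_lt_of_le ha0 ht₀.1, le_trans ht₀.2 hb1.le⟩, ?_⟩
  have : F D t₀ + t₀ = 0 := hFt₀
  linarith
end

section
/- For every integer d ≤ 4 with d ≥ 2, the only solution t ∈ [0,1] to F_d(t) = −t is t = 0, where F_d(t) = −(1/(d+1))·(d·coth(d·artanh(t)) − 1/t) extended by F_d(0)=0. -/
lemma coth_half_log (r : ℝ) (hr : 1 < r) (d : ℕ) (hd : 0 < d) :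
    coth ((d : ℝ) * ((1 / 2) * Real.log r)) = (r ^ d + 1) / (r ^ d - 1) := by
  have hr0 : (0:ℝ) < r := by linarith
  set y := (d : ℝ) * ((1 / 2) * Real.log r) with hy
  have hlog : 0 < Real.log r := Real.log_pos hr
  have hypos : 0 < y := by
    have : 0 < (d : ℝ) := by exact_mod_cast hd
    rw [hy]; positivity
  set E := Real.exp y with hE
  have hE0 : 0 < E := Real.exp_pos y
  have hE1 : 1 < E := by
    have := Real.exp_lt_exp.mpr hypos
    simpa [hE] using this
  have hE2 : E * E = r ^ d := by
    rw [hE, ← Real.exp_add]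
    have h : y + y = (d : ℝ) * Real.log r := by rw [hy]; ring
    rw [h, ← Real.log_pow, Real.exp_log (pow_pos hr0 d)]
  have hRd : 1 < r ^ d := one_lt_pow₀ hr (by omega)
  rw [coth, Real.cosh_eq, Real.sinh_eq, Real.exp_neg, ← hE]
  rw [← hE2]
  have h1 : E - E⁻¹ ≠ 0 := by
    have : E⁻¹ < 1 := inv_lt_one_of_one_lt₀ hE1
    have : E⁻¹ < E := lt_trans this hE1
    intro h; nlinarith
  have h2 : E * E - 1 ≠ 0 := by nlinarith
  field_simp

theorem stmt_10 (d : ℕ) (hd2 : 2 ≤ d) (hd4 : d ≤ 4) :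
    ∀ t ∈ Set.Icc (0 : ℝ) 1, F (d : ℝ) t = -t → t = 0 := by
  intro t ht heq
  by_contra h0
  obtain ⟨ht0, ht1⟩ := ht
  have ht0' : 0 < t := lt_of_le_of_ne ht0 (Ne.symm h0)
  have hd1 : (0:ℝ) < (d:ℝ) + 1 := by positivity
  rcases eq_or_lt_of_le ht1 with h1 | h1
  · -- t = 1
    rw [F, if_neg h0, h1] at heq
    have ha : artanh 1 = 0 := by
      simp [artanh]
    rw [ha] at heq
    simp [coth] at heq
    have hpos : 0 < ((d:ℝ) + 1)⁻¹ := by positivity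
    linarith
  · -- 0 < t < 1
    have hb : (0:ℝ) < 1 - t := by linarith
    have hr : 1 < (1 + t) / (1 - t) := by
      rw [lt_div_iff₀ hb]; linarith
    have hc := coth_half_log ((1 + t) / (1 - t)) hr d (by omega)
    rw [F, if_neg h0, artanh, hc] at heq
    have hRd : 1 < ((1 + t) / (1 - t)) ^ d := one_lt_pow₀ hr (by omega)
    rw [div_pow] at heq hRd
    have hbne : (1 - t) ≠ 0 := ne_of_gt hb
    have htne : t ≠ 0 := ne_of_gt ht0'
    have key : (1 - t) ^ d < (1 + t) ^ d := by
      exact (one_lt_div (pow_pos hb d)).mp (by linarith)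
    have hsub : (1 + t) ^ d - (1 - t) ^ d ≠ 0 := ne_of_gt (by linarith)
    interval_cases d <;>
    · field_simp [hsub] at heq
      push_cast at heq
      nlinarith [pow_pos ht0' 3, pow_pos ht0' 5, sq_nonneg t, sq_nonneg (1 - t), sq_nonneg (1 + t)]
end

section
/- For each integer d ≥ 5 and each x ∈ (0,1], the limit as n → ∞ of the n-fold composition of |F_d| applied to x is bounded below by 1 − 3/(d−1) > 0. -/
open Finset Real Filter

theorem choose_step (d j : ℕ) (hd : 5 ≤ d) (hj : 3 ≤ j) :
    12 * d.choose (j+1) ≤ (4*d-10) * d.choose j := by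
  have h := Nat.choose_succ_right_eq d j
  have h2 : 12 * (d - j) ≤ (4*d-10) * (j+1) := by
    have : d - j ≤ d - 3 := Nat.sub_le_sub_left hj d
    have h4 : 4 ≤ j + 1 := by omega
    calc 12 * (d-j) ≤ 12 * (d-3) := by omega
      _ ≤ (4*d-10) * 4 := by omega
      _ ≤ (4*d-10) * (j+1) := Nat.mul_le_mul_left _ h4
  have key : 12 * d.choose (j+1) * (j+1) ≤ (4*d-10) * d.choose j * (j+1) :=
    calc 12 * d.choose (j+1) * (j+1) = d.choose j * (12 * (d-j)) := by
          rw [mul_assoc, h]; ring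
      _ ≤ d.choose j * ((4*d-10)*(j+1)) := Nat.mul_le_mul_left _ h2
      _ = (4*d-10) * d.choose j * (j+1) := by ring
  exact Nat.le_of_mul_le_mul_right key (by omega)

theorem binom_expand (w : ℝ) (d : ℕ) :
    (w+1)^d = ∑ k ∈ range (d+1), (d.choose k : ℝ) * w^k := by
  rw [add_pow]; simp [mul_comm]

theorem split3 (d : ℕ) (hd : 5 ≤ d) (w : ℝ) :
    (w+1)^d - 1 - d*w - (d.choose 2 : ℝ)*w^2 = ∑ j ∈ Ico 3 (d+1), (d.choose j : ℝ) * w^j := by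
  have h := Finset.sum_range_add_sum_Ico (fun k => (d.choose k : ℝ) * w^k) (show 3 ≤ d+1 by omega)
  rw [binom_expand, ← h]
  simp [Finset.sum_range_succ]
  ring

theorem split4 (d : ℕ) (hd : 5 ≤ d) (w : ℝ) :
    (w+1)^d - 1 - d*w - (d.choose 2 : ℝ)*w^2 - (d.choose 3 : ℝ)*w^3
      = ∑ j ∈ Ico 4 (d+1), (d.choose j : ℝ) * w^j := by
  have h := Finset.sum_range_add_sum_Ico (fun k => (d.choose k : ℝ) * w^k) (show 4 ≤ d+1 by omega)
  rw [binom_expand, ← h]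
  simp [Finset.sum_range_succ]
  ring

theorem claimM (d : ℕ) (hd : 5 ≤ d) (w : ℝ) (hw : 0 ≤ w) :
    12 * ∑ j ∈ Ico 4 (d+1), (d.choose j : ℝ) * w^j
      ≤ ((4*d-10 : ℕ) : ℝ) * w * ∑ j ∈ Ico 3 (d+1), (d.choose j : ℝ) * w^j := by
  rw [Finset.sum_Ico_eq_sum_range, Finset.sum_Ico_eq_sum_range, Finset.mul_sum,
    Finset.mul_sum]
  calc ∑ i ∈ range (d+1-4), 12 * ((d.choose (4+i) : ℝ) * w^(4+i))
      ≤ ∑ i ∈ range (d+1-4), ((4*d-10 : ℕ) : ℝ) * w * ((d.choose (3+i) : ℝ) * w^(3+i)) := by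
        apply Finset.sum_le_sum
        intro i _
        have hc : (12 * d.choose (4+i) : ℝ) ≤ ((4*d-10) * d.choose (3+i) : ℕ) := by
          have h := choose_step d (3+i) hd (by omega)
          rw [show 3+i+1 = 4+i by omega] at h
          exact_mod_cast Nat.cast_le.2 h
        have hwp : (0:ℝ) ≤ w^(3+i) := pow_nonneg hw _
        calc 12 * ((d.choose (4+i) : ℝ) * w^(4+i)) = (12 * (d.choose (4+i):ℝ)) * (w * w^(3+i)) := by
              rw [show 4+i = (3+i)+1 by omega, pow_succ]; ring
          _ ≤ (((4*d-10 : ℕ):ℝ) * (d.choose (3+i):ℝ)) * (w * w^(3+i)) := by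
              apply mul_le_mul_of_nonneg_right _ (by positivity)
              push_cast at hc ⊢; linarith
          _ = ((4*d-10 : ℕ) : ℝ) * w * ((d.choose (3+i) : ℝ) * w^(3+i)) := by ring
    _ ≤ ∑ i ∈ range (d+1-3), ((4*d-10 : ℕ) : ℝ) * w * ((d.choose (3+i) : ℝ) * w^(3+i)) := by
        apply Finset.sum_le_sum_of_subset_of_nonneg
        · exact Finset.range_subset_range.2 (by omega)
        · intro i _ _; positivity


theorem six_choose_three (n : ℕ) : 6 * n.choose 3 = n * (n-1) * (n-2) := by
  rw [Nat.choose_eq_descFactorial_div_factorial]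
  have h : Nat.factorial 3 ∣ n.descFactorial 3 := Nat.factorial_dvd_descFactorial n 3
  have h6 : Nat.factorial 3 = 6 := by decide
  rw [h6] at h
  rw [h6, Nat.mul_div_cancel' h]
  simp [Nat.descFactorial]
  ring

-- binomial expansion
example (w : ℝ) (d : ℕ) : (w+1)^d = ∑ k ∈ range (d+1), (d.choose k : ℝ) * w^k := by
  rw [add_pow]
  simp [mul_comm]


theorem Qnonneg (d : ℕ) (hd : 5 ≤ d) (w : ℝ) (hw : 0 ≤ w) :
    2*((w+1)^d - 1 - d*w)*((d+2)*w+6) ≤ ((d:ℝ)-1)*(w+6)*w*((w+1)^d - 1) := by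
  have hD : (5:ℝ) ≤ (d:ℝ) := by exact_mod_cast hd
  have cc2 : (d.choose 2 : ℝ) = d*((d:ℝ)-1)/2 := Nat.cast_choose_two (K := ℝ) d
  have cc3 : (d.choose 3 : ℝ) = (d:ℝ)*((d:ℝ)-1)*((d:ℝ)-2)/6 := by
    have h := six_choose_three d
    have hc : ((6 * d.choose 3 : ℕ) : ℝ) = ((d * (d-1) * (d-2) : ℕ) : ℝ) := by rw [h]
    push_cast [Nat.cast_sub (show 1 ≤ d by omega), Nat.cast_sub (show 2 ≤ d by omega)] at hc
    linarith
  have hN : ((4*d-10 : ℕ) : ℝ) = 4*(d:ℝ) - 10 := by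
    push_cast [Nat.cast_sub (show 10 ≤ 4*d by omega)]; ring
  have e3 := split3 d hd w
  have e4 := split4 d hd w
  have hR3 : 0 ≤ ∑ j ∈ Ico 3 (d+1), (d.choose j : ℝ) * w^j := by
    apply Finset.sum_nonneg; intro j _; positivity
  have hM := claimM d hd w hw
  rw [← e3] at hR3 hM
  rw [← e4] at hM
  rw [cc2, cc3, hN] at hM
  rw [cc2] at hR3
  have t1 : 0 ≤ ((d:ℝ)-1) * w^2 * ((w+1)^d - 1 - d*w - (d:ℝ)*((d:ℝ)-1)/2*w^2) :=
    mul_nonneg (mul_nonneg (by linarith) (sq_nonneg w)) hR3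
  have t2 : 0 ≤ ((d:ℝ)-1) * ((d:ℝ)*((d:ℝ)-1)/2) * w^4 :=
    mul_nonneg (mul_nonneg (by linarith) (by nlinarith)) (by positivity)
  linarith [hM, t1, t2]


theorem coth_form (x : ℝ) (hx : Real.exp (2*x) ≠ 1) :
    coth x = (Real.exp (2*x) + 1) / (Real.exp (2*x) - 1) := by
  have hE : Real.exp x ≠ 0 := Real.exp_ne_zero x
  have h2 : Real.exp (2*x) = Real.exp x * Real.exp x := by rw [two_mul, Real.exp_add]
  rw [coth, Real.cosh_eq, Real.sinh_eq, Real.exp_neg, h2]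
  rw [h2] at hx
  have hne : Real.exp x - (Real.exp x)⁻¹ ≠ 0 := by
    intro h
    apply hx
    have : Real.exp x = (Real.exp x)⁻¹ := by linarith
    field_simp at this
    linarith [this]
  have hne2 : Real.exp x * Real.exp x - 1 ≠ 0 := by
    intro h; apply hne; field_simp; linarith
  field_simp

set_option maxHeartbeats 1000000 in
theorem F_bounds (d : ℕ) (hd : 5 ≤ d) (t : ℝ) (h0 : 0 < t) (h1 : t < 1) :
    ((d:ℝ)-1)*t/(3+((d:ℝ)-1)*t) ≤ |F (d:ℝ) t| ∧ |F (d:ℝ) t| ≤ ((d:ℝ)-1)/((d:ℝ)+1) := by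
  have hD : (5:ℝ) ≤ (d:ℝ) := by exact_mod_cast hd
  have ht1 : (0:ℝ) < 1 - t := by linarith
  obtain ⟨u, hu_def⟩ : ∃ u : ℝ, u = (1+t)/(1-t) := ⟨_, rfl⟩
  have hu : 1 < u := by
    rw [hu_def, lt_div_iff₀ ht1]; linarith
  have hu0 : (0:ℝ) < u := by linarith
  have hkey : (u+1)*t = u-1 := by
    rw [hu_def]; field_simp; ring
  have h1t : 1/t = (u+1)/(u-1) := by
    rw [div_eq_div_iff (ne_of_gt h0) (by linarith : u - 1 ≠ 0)]
    linarith [hkey]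
  have ha2 : Real.exp (2 * _root_.artanh t) = u := by
    rw [_root_.artanh, show 2*((1/2) * Real.log ((1+t)/(1-t))) = Real.log ((1+t)/(1-t)) by ring,
      ← hu_def, Real.exp_log hu0]
  obtain ⟨v, hv_def⟩ : ∃ v : ℝ, v = u^d := ⟨_, rfl⟩
  have hv : 1 < v := by
    rw [hv_def]; exact one_lt_pow₀ hu (by omega)
  have hdd : Real.exp (2 * ((d:ℝ) * _root_.artanh t)) = v := by
    rw [show 2*((d:ℝ) * _root_.artanh t) = (d:ℝ)*(2*_root_.artanh t) by ring, Real.exp_nat_mul, ha2, hv_def]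
  have hcoth : coth ((d:ℝ) * _root_.artanh t) = (v+1)/(v-1) := by
    rw [coth_form _ (by rw [hdd]; exact ne_of_gt hv), hdd]
  have hv1 : (0:ℝ) < v - 1 := by linarith
  have hu1 : (0:ℝ) < u - 1 := by linarith
  have hden : (0:ℝ) < (v-1)*(u-1) := mul_pos hv1 hu1
  obtain ⟨inner, hinner2⟩ : ∃ y : ℝ, y = ((d:ℝ)*(v+1)*(u-1) - (u+1)*(v-1))/((v-1)*(u-1)) :=
    ⟨_, rfl⟩
  have hF : F (d:ℝ) t = -(1/((d:ℝ)+1)) * inner := by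
    rw [F, if_neg (ne_of_gt h0), hcoth, h1t, hinner2]
    field_simp
  have hM : (0:ℝ) < ((d:ℝ)+2)*(u-1)+6 := by nlinarith
  -- lower bound for inner
  have Q := Qnonneg d hd (u-1) (by linarith)
  rw [show u-1+1 = u by ring, ← hv_def] at Q
  have hlow : ((d:ℝ)^2-1)*(u-1)/(((d:ℝ)+2)*(u-1)+6) ≤ inner := by
    rw [hinner2, div_le_div_iff₀ hM hden]
    nlinarith [Q]
  -- upper bound for inner
  have hbern : 1 + (d:ℝ)*(u-1) ≤ v := by
    have h := one_add_mul_le_pow (by linarith : (-2:ℝ) ≤ u - 1) d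
    rw [show 1+(u-1) = u by ring] at h
    rw [hv_def]; exact h
  have hup : inner ≤ (d:ℝ)-1 := by
    rw [hinner2, div_le_iff₀ hden]
    nlinarith [hbern]
  have hlowpos : (0:ℝ) < ((d:ℝ)^2-1)*(u-1)/(((d:ℝ)+2)*(u-1)+6) := by
    apply div_pos _ hM
    apply mul_pos _ hu1
    nlinarith
  have hinnerpos : (0:ℝ) < inner := lt_of_lt_of_le hlowpos hlow
  have habs : |F (d:ℝ) t| = inner/((d:ℝ)+1) := by
    rw [hF, abs_mul, abs_neg, abs_of_pos (show (0:ℝ) < 1/((d:ℝ)+1) by positivity),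
      abs_of_pos hinnerpos]
    ring
  constructor
  · rw [habs, le_div_iff₀ (by linarith : (0:ℝ) < (d:ℝ)+1)]
    have ht3 : (0:ℝ) < 3+((d:ℝ)-1)*t := by nlinarith
    have heq : ((d:ℝ)-1)*t/(3+((d:ℝ)-1)*t) * ((d:ℝ)+1)
        = ((d:ℝ)^2-1)*(u-1)/(((d:ℝ)+2)*(u-1)+6) := by
      rw [div_mul_eq_mul_div, div_eq_div_iff (ne_of_gt ht3) (ne_of_gt hM)]
      linear_combination 3*((d:ℝ)^2-1)*hkey
    rw [heq]; exact hlow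
  · rw [habs, div_le_div_iff₀ (by linarith) (by linarith)]
    nlinarith [hup]


theorem F_one (d : ℕ) : F (d:ℝ) 1 = 1/((d:ℝ)+1) := by
  rw [F, if_neg one_ne_zero]
  have h1 : _root_.artanh 1 = 0 := by rw [_root_.artanh]; norm_num
  rw [h1, mul_zero, coth, Real.sinh_zero, div_zero]
  norm_num

theorem F_maps (d : ℕ) (hd : 5 ≤ d) (t : ℝ) (h0 : 0 < t) (h1 : t ≤ 1) :
    0 < |F (d:ℝ) t| ∧ |F (d:ℝ) t| ≤ ((d:ℝ)-1)/((d:ℝ)+1) := by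
  have hD : (5:ℝ) ≤ (d:ℝ) := by exact_mod_cast hd
  rcases lt_or_eq_of_le h1 with h | h
  · obtain ⟨hl, hu⟩ := F_bounds d hd t h0 h
    refine ⟨lt_of_lt_of_le ?_ hl, hu⟩
    apply div_pos (by nlinarith) (by nlinarith)
  · rw [h, F_one]
    constructor
    · rw [abs_of_pos (by positivity)]; positivity
    · rw [abs_of_pos (by positivity)]
      rw [div_le_div_iff₀ (by linarith) (by linarith)]
      nlinarith

theorem stmt_12 (d : ℕ) (hd : 5 ≤ d) (x : ℝ) (hx : x ∈ Set.Ioc (0 : ℝ) 1) :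
    (0 < 1 - 3 / ((d : ℝ) - 1)) ∧
    ∀ L : ℝ, Filter.Tendsto (fun n => (fun y => |F (d : ℝ) y|)^[n] x)
        Filter.atTop (nhds L) → 1 - 3 / ((d : ℝ) - 1) ≤ L := by
  have hD : (5:ℝ) ≤ (d:ℝ) := by exact_mod_cast hd
  have hc1 : 0 < 1 - 3 / ((d : ℝ) - 1) := by
    rw [sub_pos, div_lt_one (by linarith)]; linarith
  refine ⟨hc1, ?_⟩
  intro L hL
  obtain ⟨hx0, hx1⟩ := hx
  set c : ℝ := 1 - 3 / ((d:ℝ) - 1) with hc_def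
  have hd1 : ((d:ℝ) - 1) ≠ 0 := by linarith
  have hcc : c = ((d:ℝ) - 4)/((d:ℝ) - 1) := by
    rw [hc_def]
    field_simp
    ring
  have hc01 : 0 < c ∧ c < 1 := by
    constructor
    · exact hc1
    · rw [hcc, div_lt_one (by linarith)]; linarith
  set T : ℝ → ℝ := fun y => |F (d:ℝ) y| with hT_def
  set y : ℕ → ℝ := fun n => T^[n] x with hy_def
  have hiter : ∀ n, y (n+1) = T (y n) := by
    intro n; rw [hy_def]; exact Function.iterate_succ_apply' T n x
  have hmem : ∀ n, 0 < y n ∧ y n ≤ 1 := by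
    intro n
    induction n with
    | zero => exact ⟨hx0, hx1⟩
    | succ k ih =>
      rw [hiter k]
      obtain ⟨h1, h2⟩ := F_maps d hd (y k) ih.1 ih.2
      exact ⟨h1, le_trans h2 (by rw [div_le_one (by linarith)]; linarith)⟩
  set z : ℕ → ℝ := fun n => y (n+1) with hz_def
  have hzmem : ∀ n, 0 < z n ∧ z n < 1 := by
    intro n
    rw [hz_def]
    simp only
    rw [hiter n]
    obtain ⟨h1, h2⟩ := F_maps d hd (y n) (hmem n).1 (hmem n).2
    refine ⟨h1, lt_of_le_of_lt h2 ?_⟩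
    rw [div_lt_one (by linarith)]; linarith
  set g : ℝ → ℝ := fun w => ((d:ℝ)-1)*w/(3+((d:ℝ)-1)*w) with hg_def
  have hstep : ∀ n, g (z n) ≤ z (n+1) := by
    intro n
    have h := (F_bounds d hd (z n) (hzmem n).1 (hzmem n).2).1
    have : z (n+1) = T (z n) := hiter (n+1)
    rw [this]
    exact h
  -- lower bound by m := min (z 0) c
  set m : ℝ := min (z 0) c with hm_def
  have hm0 : 0 < m := lt_min (hzmem 0).1 hc1
  have hgc : ∀ w, 0 < w → c ≤ w → c ≤ g w := by
    intro w hw hcw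
    rw [hg_def]
    simp only
    rw [le_div_iff₀ (by nlinarith)]
    have h' : (d:ℝ) - 4 ≤ ((d:ℝ)-1)*w := by
      rw [hcc, div_le_iff₀ (by linarith : (0:ℝ) < (d:ℝ)-1)] at hcw
      linarith
    rw [hcc, div_mul_eq_mul_div, div_le_iff₀ (by linarith : (0:ℝ) < (d:ℝ)-1)]
    nlinarith [h', hD]
  have hgy : ∀ w, 0 < w → w ≤ c → w ≤ g w := by
    intro w hw hwc
    rw [hg_def]
    simp only
    rw [le_div_iff₀ (by nlinarith)]
    rw [hcc, le_div_iff₀ (by linarith : (0:ℝ) < (d:ℝ)-1)] at hwc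
    nlinarith [mul_le_mul_of_nonneg_left hwc (le_of_lt hw)]
  have hlb : ∀ n, m ≤ z n := by
    intro n
    induction n with
    | zero => exact min_le_left _ _
    | succ k ih =>
      rcases le_or_gt (z k) c with h | h
      · calc m ≤ z k := ih
          _ ≤ g (z k) := hgy (z k) (hzmem k).1 h
          _ ≤ z (k+1) := hstep k
      · calc m ≤ c := min_le_right _ _
          _ ≤ g (z k) := hgc (z k) (hzmem k).1 (le_of_lt h)
          _ ≤ z (k+1) := hstep k
  have hzL : Tendsto z atTop (nhds L) := by
    rw [hz_def]
    exact hL.comp (tendsto_add_atTop_nat 1)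
  have hLm : m ≤ L := ge_of_tendsto hzL (Filter.Eventually.of_forall hlb)
  have hdenL : (0:ℝ) < 3 + ((d:ℝ)-1)*L := by nlinarith
  have hgL : Tendsto (fun n => g (z n)) atTop (nhds (g L)) := by
    rw [hg_def]
    simp only
    exact Tendsto.div (hzL.const_mul _) ((hzL.const_mul _).const_add 3) (ne_of_gt hdenL)
  have hzL' : Tendsto (fun n => z (n+1)) atTop (nhds L) :=
    hzL.comp (tendsto_add_atTop_nat 1)
  have hfix : g L ≤ L := le_of_tendsto_of_tendsto' hgL hzL' hstep
  rw [hg_def] at hfix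
  simp only at hfix
  rw [div_le_iff₀ hdenL] at hfix
  have hL0 : 0 < L := lt_of_lt_of_le hm0 hLm
  have h5 : (d:ℝ) - 1 ≤ 3 + ((d:ℝ)-1)*L := by nlinarith
  rw [hc_def] at *
  rw [sub_le_iff_le_add]
  have : 3/((d:ℝ)-1) ≥ 1 - L := by
    rw [ge_iff_le, le_div_iff₀ (by linarith : (0:ℝ) < (d:ℝ)-1)]
    nlinarith
  linarith
end

section
/- Fix d ≥ 5 and N ≥ 1 and define the sequence d_i = 2 for i ≤ N and d_i = 5 for i > N. Then the limiting composition lim_{n→∞} |F_{d_1}|∘…∘|F_{d_n}|(x) for x ∈ (0,1] equals (1/3^N)·x₅, where x₅ ∈ (0,1] is the unique positive solution of |F_5(x₅)| = x₅; in particular the Cesàro mean of ln((d_i−1)/3) equals ln(4/3) > 0 while the limit value tends to 0 as N → ∞. -/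
/-- `compF d n x = |F (d 0)| ∘ |F (d 1)| ∘ ⋯ ∘ |F (d (n-1))| $ x`, the composition of the
absolute transfer functions along the first `n` levels of a radial tree with degree
sequence `d` (level `i` has degree `d i`, and `F (d (n-1))` is applied first). -/
noncomputable def compF (d : ℕ → ℝ) : ℕ → ℝ → ℝ
  | 0, x => x
  | n + 1, x => compF d n (|F (d n) x|)


lemma coth_nat_mul_artanh (n : ℕ) (hn : 0 < n) {t : ℝ} (h0 : 0 < t) (h1 : t < 1) :
    coth ((n : ℝ) * artanh t) = ((1+t)^n + (1-t)^n) / ((1+t)^n - (1-t)^n) := by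
  have h1t : (0:ℝ) < 1 - t := by linarith
  have hr1 : 1 < (1+t)/(1-t) := by rw [lt_div_iff₀ h1t]; linarith
  set r : ℝ := (1+t)/(1-t) with hrdef
  have hr0 : 0 < r := lt_trans one_pos hr1
  set s : ℝ := Real.sqrt r with hsdef
  have hs0 : 0 < s := Real.sqrt_pos.mpr hr0
  have hs2 : s ^ 2 = r := Real.sq_sqrt hr0.le
  have hs1 : 1 < s := by nlinarith [hs2]
  have hart : artanh t = Real.log s := by
    rw [hsdef, Real.log_sqrt hr0.le]; unfold artanh; rw [← hrdef]; ring
  have hexp : Real.exp ((n : ℝ) * artanh t) = s ^ n := by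
    rw [hart, Real.exp_nat_mul, Real.exp_log hs0]
  set A : ℝ := s ^ n with hAdef
  have hA1 : 1 < A := one_lt_pow₀ hs1 hn.ne'
  have hA0 : (0:ℝ) < A := lt_trans one_pos hA1
  have hA2 : A ^ 2 = (1+t)^n / (1-t)^n := by
    rw [hAdef, ← pow_mul, mul_comm n 2, pow_mul, hs2, hrdef, div_pow]
  have hQ0 : (0:ℝ) < (1-t)^n := pow_pos h1t n
  have hPQ : (1-t)^n < (1+t)^n := pow_lt_pow_left₀ (by linarith) h1t.le hn.ne'
  have hPQ0 : (1+t)^n - (1-t)^n ≠ 0 := by linarith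
  unfold coth
  rw [Real.cosh_eq, Real.sinh_eq, hexp, Real.exp_neg, hexp]
  have hAA : A - A⁻¹ ≠ 0 := by
    have : A⁻¹ < 1 := inv_lt_one_of_one_lt₀ hA1
    intro h; nlinarith
  have hA2' : A ^ 2 * (1-t)^n = (1+t)^n := by
    rw [hA2]; field_simp
  clear_value A
  clear hAdef hexp hart hs2 hs1 hs0 hsdef hr1 hr0 hrdef
  have hden : (2:ℝ) * (A - A⁻¹) ≠ 0 := mul_ne_zero two_ne_zero hAA
  rw [div_div_div_eq, div_eq_div_iff hden hPQ0]
  rw [inv_eq_one_div]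
  field_simp
  linarith [hA2']

noncomputable def g5 (t : ℝ) : ℝ := (4/3) * (t * (3*t^2+5)) / (t^4+10*t^2+5)

lemma den_pos (t : ℝ) : (0:ℝ) < t^4+10*t^2+5 := by positivity

lemma F5_eq {t : ℝ} (h0 : 0 < t) (h1 : t < 1) : F 5 t = -g5 t := by
  have h5 : (5:ℝ) = ((5:ℕ):ℝ) := by norm_num
  have key := coth_nat_mul_artanh 5 (by norm_num) h0 h1
  unfold F g5
  rw [if_neg h0.ne', h5, key]
  have hden : (1+t)^5 - (1-t)^5 ≠ 0 := by nlinarith [pow_pos h0 3, pow_pos h0 5]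
  have hden2 : (1+t)^5 - (1-t)^5 = 2*(t^5+10*t^3+5*t) := by ring
  rw [hden2] at *
  have ht5 : t^5+10*t^3+5*t ≠ 0 := by positivity
  field_simp
  ring
lemma F2_eq {t : ℝ} (h0 : 0 < t) (h1 : t < 1) : F 2 t = -(t/3) := by
  have h2 : (2:ℝ) = ((2:ℕ):ℝ) := by norm_num
  have key := coth_nat_mul_artanh 2 (by norm_num) h0 h1
  unfold F
  rw [if_neg h0.ne', h2, key]
  have hden2 : (1+t)^2 - (1-t)^2 = 4*t := by ring
  rw [hden2] at *
  field_simp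
  ring
lemma F2_one : F 2 1 = 1/3 := by
  unfold F coth artanh
  norm_num
lemma F5_one : F 5 1 = 1/6 := by
  unfold F coth artanh
  norm_num

lemma g5_pos {t : ℝ} (h0 : 0 < t) : 0 < g5 t := by
  unfold g5; positivity

lemma absF5_eq {t : ℝ} (h0 : 0 < t) (h1 : t < 1) : |F 5 t| = g5 t := by
  rw [F5_eq h0 h1, abs_neg, abs_of_pos (g5_pos h0)]

lemma absF2_eq {t : ℝ} (h0 : 0 < t) (h1 : t ≤ 1) : |F 2 t| = t/3 := by
  rcases eq_or_lt_of_le h1 with h | h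
  · rw [h, F2_one]; norm_num
  · rw [F2_eq h0 h, abs_neg, abs_of_pos (by positivity)]

lemma g5_mono {a b : ℝ} (ha : 0 ≤ a) (hab : a ≤ b) (hb : b ≤ 1) : g5 a ≤ g5 b := by
  unfold g5
  rw [div_le_div_iff₀ (den_pos a) (den_pos b)]
  have h1 : 0 ≤ b - a := by linarith
  have hb0 : 0 ≤ b := ha.trans hab
  have key : 0 ≤ (b - a) * (-3*a^3*b^3 - 5*a^3*b - 5*a*b^3 + 25*a^2*b^2 + 15*a^2 + 15*b^2 - 35*a*b + 25) := by
    apply mul_nonneg h1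
    have hab0 : 0 ≤ a*b := mul_nonneg ha hb0
    have hab1 : a*b ≤ 1 := by nlinarith
    have t1 : 0 ≤ a*b*(1-a^2*b^2) := mul_nonneg hab0 (by nlinarith)
    have t2 : 0 ≤ a*b*(1-a^2) := mul_nonneg hab0 (by nlinarith)
    have t3 : 0 ≤ a*b*(1-b^2) := mul_nonneg hab0 (by nlinarith)
    nlinarith [t1, t2, t3, sq_nonneg (a-b), sq_nonneg (a*b)]
  nlinarith [key]

lemma g5_le_one {t : ℝ} (h0 : 0 ≤ t) (h1 : t ≤ 1) : g5 t ≤ 2/3 := by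
  have := g5_mono h0 h1 le_rfl
  have h : g5 1 = 2/3 := by unfold g5; norm_num
  linarith

lemma g5_fixed_iff {t : ℝ} (h0 : 0 < t) : g5 t = t ↔ 3*t^4 + 18*t^2 = 5 := by
  unfold g5
  rw [div_eq_iff (den_pos t).ne']
  constructor
  · intro h; nlinarith
  · intro h; nlinarith

lemma g5_gt {t x : ℝ} (h0 : 0 < t) (hx : 3*x^4 + 18*x^2 = 5) (htx : t ≤ x) : t ≤ g5 t := by
  unfold g5
  rw [le_div_iff₀ (den_pos t)]
  have hx0 : 0 < x := lt_of_lt_of_le h0 htx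
  have key : 0 ≤ t * ((x - t) * ((x + t) * (x^2 + t^2 + 6))) := by
    apply mul_nonneg h0.le
    apply mul_nonneg (by linarith)
    apply mul_nonneg (by linarith)
    positivity
  nlinarith [key]

lemma g5_lt {t x : ℝ} (hx0 : 0 < x) (hx : 3*x^4 + 18*x^2 = 5) (htx : x ≤ t) : g5 t ≤ t := by
  unfold g5
  rw [div_le_iff₀ (den_pos t)]
  have key : 0 ≤ t * ((t - x) * ((x + t) * (x^2 + t^2 + 6))) := by
    apply mul_nonneg (by linarith)
    apply mul_nonneg (by linarith)
    apply mul_nonneg (by linarith)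
    positivity
  nlinarith [key]

lemma g5_cont : Continuous g5 := by
  unfold g5
  exact Continuous.div (by continuity) (by continuity) (fun t => (den_pos t).ne')

lemma fixed_unique {x y : ℝ} (hx0 : 0 < x) (hy0 : 0 < y)
    (hx : 3*x^4 + 18*x^2 = 5) (hy : 3*y^4 + 18*y^2 = 5) : x = y := by
  have h : (x - y) * ((x + y) * (3*(x^2+y^2) + 18)) = 0 := by nlinarith
  rcases mul_eq_zero.mp h with h | h
  · linarith
  · exfalso; nlinarith

open Filter

lemma iter_up {x xf : ℝ} (hx0 : 0 < x) (hf0 : 0 < xf) (hf1 : xf < 1)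
    (hfe : 3*xf^4+18*xf^2 = 5) (hxf : x ≤ xf) :
    Tendsto (fun m => g5^[m] x) atTop (nhds xf) := by
  have hfix : g5 xf = xf := (g5_fixed_iff hf0).mpr hfe
  set a := fun m => g5^[m] x with ha
  have ha_succ : ∀ m, a (m+1) = g5 (a m) := fun m => Function.iterate_succ_apply' g5 m x
  have inv : ∀ m, 0 < a m ∧ a m ≤ xf := by
    intro m; induction m with
    | zero => exact ⟨hx0, hxf⟩
    | succ k ih =>
      rw [ha_succ]
      refine ⟨g5_pos ih.1, ?_⟩
      calc g5 (a k) ≤ g5 xf := g5_mono ih.1.le ih.2 hf1.le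
      _ = xf := hfix
  have hmono : Monotone a := monotone_nat_of_le_succ
    (fun m => by rw [ha_succ]; exact g5_gt (inv m).1 hfe (inv m).2)
  have hbdd : BddAbove (Set.range a) := ⟨xf, by rintro y ⟨m, rfl⟩; exact (inv m).2⟩
  have htend := tendsto_atTop_ciSup hmono hbdd
  set L := ⨆ m, a m with hLdef
  have hL1 : x ≤ L := le_ciSup hbdd 0
  have hL0 : 0 < L := lt_of_lt_of_le hx0 hL1
  have h1 : Tendsto (fun m => a (m+1)) atTop (nhds L) :=
    htend.comp (tendsto_add_atTop_nat 1)
  have h2 : Tendsto (fun m => g5 (a m)) atTop (nhds (g5 L)) := (g5_cont.tendsto L).comp htend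
  have hgL : g5 L = L := by
    refine tendsto_nhds_unique h2 ?_
    exact h1.congr ha_succ
  have hLfix : 3*L^4+18*L^2 = 5 := (g5_fixed_iff hL0).mp hgL
  have hLxf : L = xf := fixed_unique hL0 hf0 hLfix hfe
  rwa [hLxf] at htend

lemma iter_down {x xf : ℝ} (hx1 : x < 1) (hf0 : 0 < xf) (hf1 : xf < 1)
    (hfe : 3*xf^4+18*xf^2 = 5) (hxf : xf ≤ x) :
    Tendsto (fun m => g5^[m] x) atTop (nhds xf) := by
  have hfix : g5 xf = xf := (g5_fixed_iff hf0).mpr hfe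
  set a := fun m => g5^[m] x with ha
  have ha_succ : ∀ m, a (m+1) = g5 (a m) := fun m => Function.iterate_succ_apply' g5 m x
  have inv : ∀ m, xf ≤ a m ∧ a m ≤ x := by
    intro m; induction m with
    | zero => exact ⟨hxf, le_rfl⟩
    | succ k ih =>
      rw [ha_succ]
      constructor
      · calc xf = g5 xf := hfix.symm
        _ ≤ g5 (a k) := g5_mono hf0.le ih.1 (le_trans ih.2 hx1.le)
      · exact le_trans (g5_lt hf0 hfe ih.1) ih.2
  have hanti : Antitone a := antitone_nat_of_succ_le
    (fun m => by rw [ha_succ]; exact g5_lt hf0 hfe (inv m).1)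
  have hbdd : BddBelow (Set.range a) := ⟨xf, by rintro y ⟨m, rfl⟩; exact (inv m).1⟩
  have htend := tendsto_atTop_ciInf hanti hbdd
  set L := ⨅ m, a m with hLdef
  have hL1 : xf ≤ L := le_ciInf fun m => (inv m).1
  have hL0 : 0 < L := lt_of_lt_of_le hf0 hL1
  have h1 : Tendsto (fun m => a (m+1)) atTop (nhds L) :=
    htend.comp (tendsto_add_atTop_nat 1)
  have h2 : Tendsto (fun m => g5 (a m)) atTop (nhds (g5 L)) := (g5_cont.tendsto L).comp htend
  have hgL : g5 L = L := by
    refine tendsto_nhds_unique h2 ?_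
    exact h1.congr ha_succ
  have hLfix : 3*L^4+18*L^2 = 5 := (g5_fixed_iff hL0).mp hgL
  have hLxf : L = xf := fixed_unique hL0 hf0 hLfix hfe
  rwa [hLxf] at htend

lemma G_mem {x : ℝ} (hx0 : 0 < x) (hx1 : x ≤ 1) : 0 < |F 5 x| ∧ |F 5 x| ≤ 1 := by
  rcases eq_or_lt_of_le hx1 with h | h
  · rw [h, F5_one]; rw [abs_of_pos (by norm_num : (0:ℝ) < 1/6)]; norm_num
  · rw [absF5_eq hx0 h]; exact ⟨g5_pos hx0, le_trans (g5_le_one hx0.le h.le) (by norm_num)⟩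

lemma G_iter_eq : ∀ (m : ℕ) {x : ℝ}, 0 < x → x < 1 →
    (fun t => |F 5 t|)^[m] x = g5^[m] x := by
  intro m
  induction m with
  | zero => intro x _ _; rfl
  | succ k ih =>
    intro x hx0 hx1
    rw [Function.iterate_succ_apply, Function.iterate_succ_apply]
    show (fun t => |F 5 t|)^[k] |F 5 x| = g5^[k] (g5 x)
    rw [absF5_eq hx0 hx1]
    exact ih (g5_pos hx0) (lt_of_le_of_lt (g5_le_one hx0.le hx1.le) (by norm_num))

lemma G_tendsto {x xf : ℝ} (hx0 : 0 < x) (hx1 : x ≤ 1) (hf0 : 0 < xf) (hf1 : xf < 1)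
    (hfe : 3*xf^4+18*xf^2 = 5) :
    Tendsto (fun m => (fun t => |F 5 t|)^[m] x) atTop (nhds xf) := by
  have main : ∀ y : ℝ, 0 < y → y < 1 →
      Tendsto (fun m => (fun t => |F 5 t|)^[m] y) atTop (nhds xf) := by
    intro y hy0 hy1
    have heq : ∀ m, (fun t => |F 5 t|)^[m] y = g5^[m] y := fun m => G_iter_eq m hy0 hy1
    rcases le_total y xf with h | h
    · exact (iter_up hy0 hf0 hf1 hfe h).congr (fun m => (heq m).symm)
    · exact (iter_down hy1 hf0 hf1 hfe h).congr (fun m => (heq m).symm)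
  rcases eq_or_lt_of_le hx1 with h | h
  · subst h
    have h16 : Tendsto (fun m => (fun t => |F 5 t|)^[m] (1/6 : ℝ)) atTop (nhds xf) :=
      main (1/6) (by norm_num) (by norm_num)
    have hsh : Tendsto (fun m => (fun t => |F 5 t|)^[m+1] (1 : ℝ)) atTop (nhds xf) := by
      refine h16.congr (fun m => ?_)
      rw [Function.iterate_succ_apply]
      show (fun t => |F 5 t|)^[m] (1/6) = (fun t => |F 5 t|)^[m] |F 5 1|
      rw [F5_one, abs_of_pos (by norm_num : (0:ℝ) < 1/6)]
    exact (tendsto_add_atTop_iff_nat 1).mp hsh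
  · exact main x hx0 h


theorem stmt_16 (N : ℕ) (hN : 1 ≤ N)
    (dseq : ℕ → ℝ) (hdseq : ∀ i, dseq i = if i < N then 2 else 5) :
    (∃! x₅ : ℝ, x₅ ∈ Set.Ioc (0 : ℝ) 1 ∧ |F 5 x₅| = x₅) ∧
    ∀ x₅ : ℝ, x₅ ∈ Set.Ioc (0 : ℝ) 1 → |F 5 x₅| = x₅ →
      (∀ x ∈ Set.Ioc (0 : ℝ) 1,
        Filter.Tendsto (fun n => compF dseq n x) Filter.atTop
          (nhds ((1 / 3 ^ N) * x₅))) ∧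
      Filter.Tendsto
        (fun n : ℕ => (1 / (n : ℝ)) * ∑ i ∈ Finset.range n, Real.log ((dseq i - 1) / 3))
        Filter.atTop (nhds (Real.log (4 / 3))) ∧
      0 < Real.log (4 / 3) ∧
      Filter.Tendsto (fun M : ℕ => (1 / 3 ^ M : ℝ) * x₅) Filter.atTop (nhds 0) := by
  -- facts about any fixed point in (0,1]
  have hchar : ∀ y : ℝ, y ∈ Set.Ioc (0:ℝ) 1 → |F 5 y| = y → y < 1 ∧ 3*y^4 + 18*y^2 = 5 := by
    rintro y ⟨hy0, hy1⟩ hfix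
    rcases eq_or_lt_of_le hy1 with h | h
    · exfalso
      rw [h, F5_one, abs_of_pos (by norm_num : (0:ℝ) < 1/6)] at hfix
      norm_num at hfix
    · refine ⟨h, ?_⟩
      rw [absF5_eq hy0 h] at hfix
      exact (g5_fixed_iff hy0).mp hfix
  constructor
  · -- existence and uniqueness
    have h6 : Real.sqrt 6 ^ 2 = 6 := Real.sq_sqrt (by norm_num)
    have h60 : 0 ≤ Real.sqrt 6 := Real.sqrt_nonneg 6
    have h6lb : 2 < Real.sqrt 6 := by nlinarith
    have h6ub : Real.sqrt 6 < 3 := by nlinarith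
    have hq : (0:ℝ) < (4*Real.sqrt 6 - 9)/3 := by nlinarith
    set c : ℝ := Real.sqrt ((4*Real.sqrt 6 - 9)/3) with hc
    have hc2 : c ^ 2 = (4*Real.sqrt 6 - 9)/3 := Real.sq_sqrt hq.le
    have hc0 : 0 < c := Real.sqrt_pos.mpr hq
    have hc1 : c < 1 := by nlinarith
    have hce : 3*c^4 + 18*c^2 = 5 := by nlinarith
    refine ⟨c, ⟨⟨hc0, hc1.le⟩, ?_⟩, ?_⟩
    · rw [absF5_eq hc0 hc1]
      exact (g5_fixed_iff hc0).mpr hce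
    · rintro y ⟨hy, hyfix⟩
      obtain ⟨hy1, hye⟩ := hchar y hy hyfix
      exact fixed_unique hy.1 hc0 hye hce
  · rintro xf hxf hxffix
    obtain ⟨hf1, hfe⟩ := hchar xf hxf hxffix
    obtain ⟨hf0, _⟩ := hxf
    refine ⟨?_, ?_, Real.log_pos (by norm_num), ?_⟩
    · -- main convergence
      rintro x ⟨hx0, hx1⟩
      -- compF with only degree-2 levels
      have comp2 : ∀ k, k ≤ N → ∀ y : ℝ, 0 < y → y ≤ 1 → compF dseq k y = y / 3^k := by
        intro k
        induction k with
        | zero => intro _ y _ _; simp [compF]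
        | succ j ih =>
          intro hj y hy0 hy1
          show compF dseq j (|F (dseq j) y|) = y / 3^(j+1)
          rw [hdseq j, if_pos (by omega), absF2_eq hy0 hy1]
          rw [ih (by omega) (y/3) (by positivity) (by linarith)]
          ring
      have compmain : ∀ m, ∀ y : ℝ, 0 < y → y ≤ 1 →
          compF dseq (N + m) y = ((fun t => |F 5 t|)^[m] y) / 3^N := by
        intro m
        induction m with
        | zero => intro y hy0 hy1; simpa using comp2 N le_rfl y hy0 hy1
        | succ j ih =>
          intro y hy0 hy1
          show compF dseq (N + j) (|F (dseq (N + j)) y|) = _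
          rw [hdseq (N + j), if_neg (by omega)]
          obtain ⟨hG0, hG1⟩ := G_mem hy0 hy1
          rw [ih _ hG0 hG1, Function.iterate_succ_apply]
      have htd : Tendsto (fun n : ℕ => ((fun t => |F 5 t|)^[n - N] x) / 3^N) atTop
          (nhds (xf / 3^N)) := by
        have h1 : Tendsto (fun m => (fun t => |F 5 t|)^[m] x) atTop (nhds xf) :=
          G_tendsto hx0 hx1 hf0 hf1 hfe
        have h2 : Tendsto (fun n : ℕ => n - N) atTop atTop := tendsto_sub_atTop_nat N
        exact (h1.comp h2).div_const _
      have heq : (fun n : ℕ => ((fun t => |F 5 t|)^[n - N] x) / 3^N) =ᶠ[atTop]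
          (fun n => compF dseq n x) := by
        filter_upwards [eventually_ge_atTop N] with n hn
        have hrw : N + (n - N) = n := by omega
        have h := compmain (n - N) x hx0 hx1
        rw [hrw] at h
        exact h.symm
      have : (1 / 3 ^ N : ℝ) * xf = xf / 3^N := by ring
      rw [this]
      exact htd.congr' heq
    · -- Cesàro mean
      have hsum : ∀ n, N ≤ n → ∑ i ∈ Finset.range n, Real.log ((dseq i - 1)/3)
          = N * Real.log (1/3) + ((n:ℝ) - N) * Real.log (4/3) := by
        intro n hn
        rw [Finset.range_eq_Ico, ← Finset.sum_Ico_consecutive _ (Nat.zero_le N) hn]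
        have e1 : ∑ i ∈ Finset.Ico 0 N, Real.log ((dseq i - 1)/3) = N * Real.log (1/3) := by
          have hcongr : ∀ i ∈ Finset.Ico 0 N, Real.log ((dseq i - 1)/3) = Real.log (1/3) := by
            intro i hi; rw [hdseq i, if_pos (Finset.mem_Ico.mp hi).2]; norm_num
          rw [Finset.sum_congr rfl hcongr, Finset.sum_const, Nat.card_Ico, nsmul_eq_mul]
          norm_num
        have e2 : ∑ i ∈ Finset.Ico N n, Real.log ((dseq i - 1)/3)
            = ((n:ℝ) - N) * Real.log (4/3) := by
          have hcongr : ∀ i ∈ Finset.Ico N n, Real.log ((dseq i - 1)/3) = Real.log (4/3) := by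
            intro i hi
            rw [hdseq i, if_neg (by have := (Finset.mem_Ico.mp hi).1; omega)]; norm_num
          rw [Finset.sum_congr rfl hcongr, Finset.sum_const, Nat.card_Ico, nsmul_eq_mul,
            Nat.cast_sub hn]
        rw [e1, e2]
      have key : Tendsto (fun n : ℕ => Real.log (4/3)
          + ((N:ℝ) * (Real.log (1/3) - Real.log (4/3))) * (1/(n:ℝ))) atTop
          (nhds (Real.log (4/3))) := by
        have ha : Tendsto (fun _ : ℕ => Real.log (4/3)) atTop (nhds (Real.log (4/3))) :=
          tendsto_const_nhds
        have hb : Tendsto (fun n : ℕ => ((N:ℝ) * (Real.log (1/3) - Real.log (4/3))) * (1/(n:ℝ)))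
            atTop (nhds 0) := by
          simpa using tendsto_one_div_atTop_nhds_zero_nat.const_mul
            ((N:ℝ) * (Real.log (1/3) - Real.log (4/3)))
        simpa using ha.add hb
      refine key.congr' ?_
      filter_upwards [eventually_ge_atTop (max N 1)] with n hn
      have hnN : N ≤ n := le_trans (le_max_left _ _) hn
      have hn1 : (1:ℕ) ≤ n := le_trans (le_max_right _ _) hn
      have hn0 : (0:ℝ) < (n:ℝ) := by exact_mod_cast hn1
      rw [hsum n hnN]
      field_simp
      ring
    · -- 1/3^M * xf → 0
      have h1 : Tendsto (fun M : ℕ => ((1:ℝ)/3)^M) atTop (nhds 0) :=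
        tendsto_pow_atTop_nhds_zero_of_lt_one (by norm_num) (by norm_num)
      have h2 := h1.mul_const xf
      rw [zero_mul] at h2
      refine h2.congr (fun M => ?_)
      rw [div_pow, one_pow]
end
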